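/- For every p > 3/2, s ≥ 0, and z₁, z₂ ∈ ℝ^{N×n}, there exist constants c₁, c₂ > 0 depending only on n, N, p such that c₁(s²+|z₁|²+|z₂|²)^{(p−2)/2}|z₁−z₂| ≤ |W_s(z₁)−W_s(z₂)| ≤ c₂(s²+|z₁|²+|z₂|²)^{(p−2)/2}|z₁−z₂|. -/

import Mathlib

open Real Set

lemma mvt_rpow (α a b : ℝ) (ha : 0 < a) (hab : a ≤ b) :
    ∃ ξ, a ≤ ξ ∧ ξ ≤ b ∧ b ^ α - a ^ α = α * ξ ^ (α - 1) * (b - a) := by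
  rcases eq_or_lt_of_le hab with rfl | hab
  · exact ⟨a, le_rfl, le_rfl, by ring⟩
  · obtain ⟨ξ, hξ, hslope⟩ := exists_hasDerivAt_eq_slope (fun x => x ^ α)
      (fun x => α * x ^ (α - 1)) hab
      (fun x hx => (Real.hasDerivAt_rpow_const
        (Or.inl (ne_of_gt (lt_of_lt_of_le ha hx.1)))).continuousAt.continuousWithinAt)
      (fun x hx => Real.hasDerivAt_rpow_const (Or.inl (ne_of_gt (lt_trans ha hx.1))))
    refine ⟨ξ, le_of_lt hξ.1, le_of_lt hξ.2, ?_⟩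
    rw [eq_div_iff (by linarith : b - a ≠ 0)] at hslope
    linarith [hslope]

-- |A₁^α - A₂^α| ≤ 8|α| A₁^(α-1) (A₁ - A₂) when A₁/4 ≤ A₂ ≤ A₁, A₂ > 0, α > -1/2
lemma lemB (α A₁ A₂ : ℝ) (hα : -(1/2) < α) (h2 : 0 < A₂) (h21 : A₂ ≤ A₁) (h14 : A₁ ≤ 4 * A₂) :
    |A₁ ^ α - A₂ ^ α| ≤ 8 * |α| * A₁ ^ (α - 1) * (A₁ - A₂) := by
  obtain ⟨ξ, hξ1, hξ2, heq⟩ := mvt_rpow α A₂ A₁ h2 h21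
  have hξpos : 0 < ξ := lt_of_lt_of_le h2 hξ1
  have h1pos : 0 < A₁ := lt_of_lt_of_le h2 h21
  have hkey : ξ ^ (α - 1) ≤ 8 * A₁ ^ (α - 1) := by
    rcases le_or_gt 1 α with h1 | h1
    · have : ξ ^ (α - 1) ≤ A₁ ^ (α - 1) :=
        Real.rpow_le_rpow (le_of_lt hξpos) hξ2 (by linarith)
      have hp : 0 < A₁ ^ (α - 1) := Real.rpow_pos_of_pos h1pos _
      linarith
    · have hst : ξ ^ (α - 1) ≤ A₂ ^ (α - 1) :=
        Real.rpow_le_rpow_of_nonpos h2 hξ1 (by linarith)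
      have h4 : (A₁ / 4) ^ (α - 1) ≤ (8:ℝ) * A₁ ^ (α - 1) := by
        have e1 : (A₁ / 4) ^ (α - 1) = A₁ ^ (α - 1) * ((4:ℝ) ^ (1 - α)) := by
          rw [Real.div_rpow (le_of_lt h1pos) (by norm_num)]
          rw [show (1 - α) = -(α-1) by ring, Real.rpow_neg (by norm_num : (0:ℝ) ≤ 4)]
          field_simp
        have e2 : (4:ℝ) ^ ((3:ℝ)/2) = 8 := by
          rw [show (4:ℝ) = (2:ℝ)^(2:ℕ) by norm_num, ← Real.rpow_natCast (2:ℝ) 2,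
            ← Real.rpow_mul (by norm_num : (0:ℝ) ≤ 2)]
          rw [show ((2:ℕ):ℝ) * ((3:ℝ)/2) = ((3:ℕ):ℝ) by norm_num, Real.rpow_natCast]
          norm_num
        have e3 : (4:ℝ) ^ (1 - α) ≤ (4:ℝ) ^ ((3:ℝ)/2) :=
          Real.rpow_le_rpow_of_exponent_le (by norm_num) (by linarith)
        rw [e1]
        calc A₁ ^ (α - 1) * ((4:ℝ) ^ (1 - α)) ≤ A₁ ^ (α - 1) * 8 := by
              rw [← e2] at *
              exact mul_le_mul_of_nonneg_left e3 (le_of_lt (Real.rpow_pos_of_pos h1pos _))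
          _ = 8 * A₁ ^ (α - 1) := by ring
      have hst2 : A₂ ^ (α - 1) ≤ (A₁ / 4) ^ (α - 1) :=
        Real.rpow_le_rpow_of_nonpos (by linarith) (by linarith) (by linarith)
      linarith
  have habs : |A₁ ^ α - A₂ ^ α| = |α| * ξ ^ (α - 1) * (A₁ - A₂) := by
    rw [heq, abs_mul, abs_mul, abs_of_nonneg (le_of_lt (Real.rpow_pos_of_pos hξpos _)),
      abs_of_nonneg (by linarith : (0:ℝ) ≤ A₁ - A₂)]
  rw [habs]
  have : |α| * ξ ^ (α - 1) ≤ |α| * (8 * A₁ ^ (α - 1)) :=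
    mul_le_mul_of_nonneg_left hkey (abs_nonneg _)
  nlinarith [abs_nonneg α, sub_nonneg.mpr h21]

lemma half_rpow (T α : ℝ) (hT : 0 ≤ T) : (T / 2) ^ α = (2:ℝ)^(-α) * T ^ α := by
  rw [Real.div_rpow hT (by norm_num), Real.rpow_neg (by norm_num : (0:ℝ) ≤ 2)]
  ring

lemma a1_ge (α s x y : ℝ) (hy : 0 ≤ y) (hxy : y ≤ x) (hT : 0 < s^2+x^2+y^2) :
    (2:ℝ)^(-|α|) * (s^2+x^2+y^2)^α ≤ (s^2+x^2)^α := by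
  set T := s^2+x^2+y^2 with hTdef
  have hA1T : s^2+x^2 ≤ T := by nlinarith
  have hA1half : T / 2 ≤ s^2+x^2 := by nlinarith
  have hA1pos : 0 < s^2+x^2 := by nlinarith
  have hTpos : 0 ≤ T ^ α := le_of_lt (Real.rpow_pos_of_pos hT _)
  rcases le_or_gt 0 α with h0 | h0
  · rw [abs_of_nonneg h0, ← half_rpow T α (le_of_lt hT)]
    exact Real.rpow_le_rpow (by linarith) hA1half h0
  · rw [abs_of_neg h0, neg_neg]
    have h1 : T ^ α ≤ (s^2+x^2) ^ α := Real.rpow_le_rpow_of_nonpos hA1pos hA1T (le_of_lt h0)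
    have h2 : (2:ℝ)^α ≤ 1 := by
      calc (2:ℝ)^α ≤ (2:ℝ)^(0:ℝ) := Real.rpow_le_rpow_of_exponent_le (by norm_num) (le_of_lt h0)
        _ = 1 := Real.rpow_zero 2
    nlinarith

lemma a1_le (α s x y : ℝ) (hy : 0 ≤ y) (hxy : y ≤ x) (hT : 0 < s^2+x^2+y^2) :
    (s^2+x^2)^α ≤ (2:ℝ)^(|α|) * (s^2+x^2+y^2)^α := by
  set T := s^2+x^2+y^2 with hTdef
  have hA1T : s^2+x^2 ≤ T := by nlinarith
  have hA1half : T / 2 ≤ s^2+x^2 := by nlinarith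
  have hA1pos : 0 < s^2+x^2 := by nlinarith
  have hTpos : 0 ≤ T ^ α := le_of_lt (Real.rpow_pos_of_pos hT _)
  rcases le_or_gt 0 α with h0 | h0
  · rw [abs_of_nonneg h0]
    have h1 : (s^2+x^2) ^ α ≤ T ^ α := Real.rpow_le_rpow (le_of_lt hA1pos) hA1T h0
    have h2 : (1:ℝ) ≤ (2:ℝ)^α := by
      calc (1:ℝ) = (2:ℝ)^(0:ℝ) := (Real.rpow_zero 2).symm
        _ ≤ (2:ℝ)^α := Real.rpow_le_rpow_of_exponent_le (by norm_num) h0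
    nlinarith
  · rw [abs_of_neg h0, ← half_rpow T α (le_of_lt hT)]
    exact Real.rpow_le_rpow_of_nonpos (by linarith) hA1half (le_of_lt h0)

set_option maxHeartbeats 1000000 in
lemma scalar_lower (α s x y : ℝ) (hα : -(1/2) < α) (hy : 0 ≤ y) (hxy : y ≤ x)
    (hT : 0 < s^2+x^2+y^2) :
    min (1+2*α) 1 * (2:ℝ)^(-|α|) * (s^2+x^2+y^2)^α * (x - y) ≤
      (s^2+x^2)^α * x - (s^2+y^2)^α * y := by
  set T := s^2+x^2+y^2 with hTdef
  have hx : 0 ≤ x := le_trans hy hxy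
  have hA1pos : 0 < s^2+x^2 := by nlinarith
  have hTα : 0 < T ^ α := Real.rpow_pos_of_pos hT _
  have hmin1 : min (1+2*α) 1 ≤ 1 := min_le_right _ _
  have hminpos : 0 < min (1+2*α) 1 := lt_min (by linarith) one_pos
  have h2pow : 0 < (2:ℝ)^(-|α|) := Real.rpow_pos_of_pos (by norm_num) _
  have h2pow1 : (2:ℝ)^(-|α|) ≤ 1 := by
    calc (2:ℝ)^(-|α|) ≤ (2:ℝ)^(0:ℝ) :=
        Real.rpow_le_rpow_of_exponent_le (by norm_num) (neg_nonpos.mpr (abs_nonneg _))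
      _ = 1 := Real.rpow_zero 2
  rcases le_or_gt 0 α with h0 | h0
  · -- α ≥ 0 : a₁x - a₂y ≥ a₁(x-y) ≥ 2^{-|α|}T^α (x-y)
    have ha21 : (s^2+y^2)^α ≤ (s^2+x^2)^α :=
      Real.rpow_le_rpow (by positivity) (by nlinarith) h0
    have hge := a1_ge α s x y hy hxy hT
    have h1 : (2:ℝ)^(-|α|) * T^α * (x - y) ≤ (s^2+x^2)^α * (x - y) :=
      mul_le_mul_of_nonneg_right hge (by linarith)
    have hfac : 0 ≤ (2:ℝ)^(-|α|) * T^α * (x-y) :=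
      mul_nonneg (mul_nonneg (le_of_lt h2pow) (le_of_lt hTα)) (by linarith)
    calc min (1+2*α) 1 * (2:ℝ)^(-|α|) * T^α * (x - y)
        = min (1+2*α) 1 * ((2:ℝ)^(-|α|) * T^α * (x - y)) := by ring
      _ ≤ 1 * ((2:ℝ)^(-|α|) * T^α * (x - y)) := mul_le_mul_of_nonneg_right hmin1 hfac
      _ = (2:ℝ)^(-|α|) * T^α * (x - y) := one_mul _
      _ ≤ (s^2+x^2)^α * (x - y) := h1
      _ = (s^2+x^2)^α * x - (s^2+x^2)^α * y := by ring
      _ ≤ (s^2+x^2)^α * x - (s^2+y^2)^α * y := by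
          linarith [mul_le_mul_of_nonneg_right ha21 hy]
  · -- α < 0 : use MVT
    rcases eq_or_lt_of_le hxy with rfl | hxy'
    · simp
    rcases eq_or_lt_of_le (by positivity : (0:ℝ) ≤ s^2+y^2) with hA2 | hA2pos
    · -- s = 0, y = 0
      have hs0 : s = 0 := by nlinarith [sq_nonneg s, sq_nonneg y]
      have hy0 : y = 0 := by nlinarith [sq_nonneg s, sq_nonneg y]
      subst hs0; subst hy0
      have hTx : T = x^2 := by rw [hTdef]; ring
      have hxpos : 0 < x := by nlinarith
      have hp : 0 ≤ (x^2)^α * x := by positivity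
      have hco : min (1+2*α) 1 * (2:ℝ)^(-|α|) ≤ 1 :=
        mul_le_one₀ hmin1 (le_of_lt h2pow) h2pow1
      have hgoal2 : ((0:ℝ)^2 + x^2)^α * x - ((0:ℝ)^2 + (0:ℝ)^2)^α * 0 = (x^2)^α * x := by
        norm_num
      rw [hgoal2, hTx]
      calc min (1+2*α) 1 * (2:ℝ)^(-|α|) * (x^2)^α * (x - 0)
          = (min (1+2*α) 1 * (2:ℝ)^(-|α|)) * ((x^2)^α * x) := by ring
        _ ≤ 1 * ((x^2)^α * x) := mul_le_mul_of_nonneg_right hco hp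
        _ = (x^2)^α * x := one_mul _
    · -- MVT on f t = (s²+t²)^α t over [y, x]
      have hderiv : ∀ t ∈ Set.Ioo y x, HasDerivAt (fun t => (s^2+t^2)^α * t)
          ((α * (s^2+t^2)^(α-1) * (2*t)) * t + (s^2+t^2)^α * 1) t := by
        intro t ht
        have hA : s^2+t^2 ≠ 0 := by nlinarith [ht.1, sq_nonneg s, sq_nonneg t, sq_nonneg (t-y)]
        have h1 : HasDerivAt (fun t : ℝ => s^2+t^2) (2*t) t := by
          simpa using ((hasDerivAt_pow 2 t).const_add (s^2))
        have h2 : HasDerivAt (fun t : ℝ => (s^2+t^2)^α) (α * (s^2+t^2)^(α-1) * (2*t)) t := by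
          have := (Real.hasDerivAt_rpow_const (x := s^2+t^2) (p := α) (Or.inl hA)).comp t h1
          simpa [mul_assoc, Function.comp_def] using this
        exact h2.mul (hasDerivAt_id t)
      have hcont : ContinuousOn (fun t => (s^2+t^2)^α * t) (Set.Icc y x) := by
        intro t ht
        have hA : s^2+t^2 ≠ 0 := by nlinarith [ht.1, sq_nonneg s, sq_nonneg t, sq_nonneg (t-y)]
        have h1 : HasDerivAt (fun t : ℝ => s^2+t^2) (2*t) t := by
          simpa using ((hasDerivAt_pow 2 t).const_add (s^2))
        have h2 : HasDerivAt (fun t : ℝ => (s^2+t^2)^α) (α * (s^2+t^2)^(α-1) * (2*t)) t := by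
          have := (Real.hasDerivAt_rpow_const (x := s^2+t^2) (p := α) (Or.inl hA)).comp t h1
          simpa [mul_assoc, Function.comp_def] using this
        exact ((h2.mul (hasDerivAt_id t)).continuousAt).continuousWithinAt
      obtain ⟨ξ, hξ, hslope⟩ := exists_hasDerivAt_eq_slope (fun t => (s^2+t^2)^α * t)
        (fun t => (α * (s^2+t^2)^(α-1) * (2*t)) * t + (s^2+t^2)^α * 1) hxy' hcont hderiv
      rw [eq_div_iff (by linarith [hxy'] : x - y ≠ 0)] at hslope
      -- bound the derivative below
      have hξy : y < ξ := hξ.1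
      have hξx : ξ < x := hξ.2
      have hξ0 : 0 ≤ ξ := le_of_lt (lt_of_le_of_lt hy hξy)
      have hAξpos : 0 < s^2+ξ^2 := by nlinarith [sq_nonneg s, hA2pos]
      have hAξα : 0 < (s^2+ξ^2)^α := Real.rpow_pos_of_pos hAξpos _
      have hstep : (s^2+ξ^2)^(α-1) * (s^2+ξ^2) = (s^2+ξ^2)^α := by
        rw [← Real.rpow_add_one (ne_of_gt hAξpos)]; ring_nf
      have hd1 : (1+2*α) * (s^2+ξ^2)^α ≤
          (α * (s^2+ξ^2)^(α-1) * (2*ξ)) * ξ + (s^2+ξ^2)^α * 1 := by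
        have hb : ξ^2 * (s^2+ξ^2)^(α-1) ≤ (s^2+ξ^2)^α := by
          calc ξ^2 * (s^2+ξ^2)^(α-1) ≤ (s^2+ξ^2) * (s^2+ξ^2)^(α-1) := by
                apply mul_le_mul_of_nonneg_right (by nlinarith)
                  (le_of_lt (Real.rpow_pos_of_pos hAξpos _))
            _ = (s^2+ξ^2)^α := by rw [mul_comm]; exact hstep
        nlinarith [mul_le_mul_of_nonneg_left hb (by linarith : (0:ℝ) ≤ -(2*α))]
      have hAξ1 : (s^2+x^2)^α ≤ (s^2+ξ^2)^α :=
        Real.rpow_le_rpow_of_nonpos hAξpos (by nlinarith) (le_of_lt h0)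
      have hA1T : T^α ≤ (s^2+x^2)^α :=
        Real.rpow_le_rpow_of_nonpos hA1pos (by nlinarith) (le_of_lt h0)
      have hfinal : min (1+2*α) 1 * (2:ℝ)^(-|α|) * T^α ≤
          (α * (s^2+ξ^2)^(α-1) * (2*ξ)) * ξ + (s^2+ξ^2)^α * 1 := by
        have e1 : min (1+2*α) 1 * (2:ℝ)^(-|α|) * T^α ≤ (1+2*α) * T^α := by
          have hco : min (1+2*α) 1 * (2:ℝ)^(-|α|) ≤ (1+2*α) := by
            calc min (1+2*α) 1 * (2:ℝ)^(-|α|) ≤ (1+2*α) * 1 :=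
                mul_le_mul (min_le_left _ _) h2pow1 (le_of_lt h2pow) (by linarith)
              _ = 1+2*α := mul_one _
          exact mul_le_mul_of_nonneg_right hco (le_of_lt hTα)
        have e2 : (1+2*α) * T^α ≤ (1+2*α) * (s^2+ξ^2)^α := by
          have : T^α ≤ (s^2+ξ^2)^α := le_trans hA1T hAξ1
          nlinarith
        linarith
      have hslope' : ((α * (s^2+ξ^2)^(α-1) * (2*ξ)) * ξ + (s^2+ξ^2)^α * 1) * (x - y)
          = (s^2+x^2)^α * x - (s^2+y^2)^α * y := by
        simpa using hslope
      have hmm := mul_le_mul_of_nonneg_right hfinal (by linarith : (0:ℝ) ≤ x - y)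
      linarith [hmm, hslope'.le, hslope'.ge]

lemma quarter_rpow (T α : ℝ) (hT : 0 ≤ T) : (T / 4) ^ α = (4:ℝ)^(-α) * T ^ α := by
  rw [Real.div_rpow hT (by norm_num), Real.rpow_neg (by norm_num : (0:ℝ) ≤ 4)]
  ring

lemma sq_rpow_half (y : ℝ) (hy : 0 ≤ y) : ((y^2):ℝ) ^ ((1:ℝ)/2) = y := by
  rw [← Real.rpow_natCast y 2, ← Real.rpow_mul hy]
  norm_num

set_option maxHeartbeats 1000000 in
lemma scalar_upper (α s x y h : ℝ) (hα : -(1/2) < α) (hy : 0 ≤ y) (hxy : y ≤ x)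
    (hT : 0 < s^2+x^2+y^2) (hh0 : 0 ≤ h) (hh1 : x - y ≤ h) :
    (s^2+x^2)^α * h + |(s^2+x^2)^α - (s^2+y^2)^α| * y ≤
      ((2:ℝ)^ |α| + 4*(8:ℝ)^ |α| + 16* |α| *(2:ℝ)^ |α|) * (s^2+x^2+y^2)^α * h := by
  set T := s^2+x^2+y^2 with hTdef
  have hx : 0 ≤ x := le_trans hy hxy
  have hA1pos : 0 < s^2+x^2 := by nlinarith
  have hA2nn : 0 ≤ s^2+y^2 := by positivity
  have hTα : 0 < T ^ α := Real.rpow_pos_of_pos hT _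
  have h2a : 0 < (2:ℝ)^ |α| := Real.rpow_pos_of_pos (by norm_num) _
  have h8a : 0 < (8:ℝ)^ |α| := Real.rpow_pos_of_pos (by norm_num) _
  have h4a : 0 < (4:ℝ)^ |α| := Real.rpow_pos_of_pos (by norm_num) _
  have h28 : (2:ℝ)^ |α| ≤ (8:ℝ)^ |α| := Real.rpow_le_rpow (by norm_num) (by norm_num) (abs_nonneg _)
  have h48 : (4:ℝ)^ |α| * (2:ℝ)^ |α| = (8:ℝ)^ |α| := by
    rw [← Real.mul_rpow (by norm_num) (by norm_num)]; norm_num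
  have hle1 := a1_le α s x y hy hxy hT
  have hterm1 : (s^2+x^2)^α * h ≤ (2:ℝ)^ |α| * T^α * h :=
    mul_le_mul_of_nonneg_right hle1 hh0
  have hA1α : 0 < (s^2+x^2)^α := Real.rpow_pos_of_pos hA1pos _
  have hterm2 : |(s^2+x^2)^α - (s^2+y^2)^α| * y ≤
      (4*(8:ℝ)^ |α| + 16* |α| *(2:ℝ)^ |α|) * T^α * h := by
    rcases lt_or_ge (x/2) y with hnear | hfar
    · -- near case : x/2 < y ≤ x, use lemB
      have hA2pos : 0 < s^2+y^2 := by nlinarith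
      have h21 : s^2+y^2 ≤ s^2+x^2 := by nlinarith
      have h14 : s^2+x^2 ≤ 4*(s^2+y^2) := by nlinarith
      have hB := lemB α (s^2+x^2) (s^2+y^2) hα hA2pos h21 h14
      have hA1m1 : 0 ≤ (s^2+x^2)^(α-1) := le_of_lt (Real.rpow_pos_of_pos hA1pos _)
      have hstep : (s^2+x^2)^(α-1) * (s^2+x^2) = (s^2+x^2)^α := by
        rw [← Real.rpow_add_one (ne_of_gt hA1pos)]; ring_nf
      have hk : ((s^2+x^2) - (s^2+y^2)) * y ≤ 2*(s^2+x^2)*h := by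
        have k1 : (x+y)*y*(x-y) ≤ (x+y)*y*h :=
          mul_le_mul_of_nonneg_left hh1 (mul_nonneg (by linarith) hy)
        have k2 : (x+y)*y*h ≤ 2*x^2*h := by
          apply mul_le_mul_of_nonneg_right _ hh0
          nlinarith [mul_nonneg (sub_nonneg.mpr hxy) hx, mul_nonneg (sub_nonneg.mpr hxy) hy]
        nlinarith [k1, k2, mul_nonneg (sq_nonneg s) hh0]
      calc |(s^2+x^2)^α - (s^2+y^2)^α| * y
          ≤ (8*|α| * (s^2+x^2)^(α-1) * ((s^2+x^2) - (s^2+y^2))) * y :=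
            mul_le_mul_of_nonneg_right hB hy
        _ = (8*|α| * (s^2+x^2)^(α-1)) * (((s^2+x^2) - (s^2+y^2)) * y) := by ring
        _ ≤ (8*|α| * (s^2+x^2)^(α-1)) * (2*(s^2+x^2)*h) := by
            apply mul_le_mul_of_nonneg_left hk
            positivity
        _ = 16*|α| * ((s^2+x^2)^(α-1) * (s^2+x^2)) * h := by ring
        _ = 16*|α| * (s^2+x^2)^α * h := by rw [hstep]
        _ ≤ 16*|α| * ((2:ℝ)^ |α| * T^α) * h := by
            apply mul_le_mul_of_nonneg_right _ hh0
            exact mul_le_mul_of_nonneg_left hle1 (by positivity)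
        _ ≤ (4*(8:ℝ)^ |α| + 16* |α| *(2:ℝ)^ |α|) * T^α * h := by
            nlinarith [mul_nonneg (le_of_lt hTα) hh0, mul_pos h8a hTα,
              mul_nonneg (mul_nonneg (le_of_lt h8a) (le_of_lt hTα)) hh0]
    · -- far case : y ≤ x/2, so y ≤ h and x ≤ 2h
      have hyh : y ≤ h := by linarith
      rcases le_or_gt 0 α with h0 | h0
      · -- α ≥ 0
        have ha21 : (s^2+y^2)^α ≤ (s^2+x^2)^α := Real.rpow_le_rpow hA2nn (by nlinarith) h0
        have habs : |(s^2+x^2)^α - (s^2+y^2)^α| ≤ (s^2+x^2)^α := by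
          rw [abs_of_nonneg (by linarith)]
          have : 0 ≤ (s^2+y^2)^α := Real.rpow_nonneg hA2nn _
          linarith
        calc |(s^2+x^2)^α - (s^2+y^2)^α| * y ≤ (s^2+x^2)^α * h := by
              apply mul_le_mul habs hyh hy (le_of_lt hA1α)
          _ ≤ (2:ℝ)^ |α| * T^α * h := hterm1
          _ ≤ (4*(8:ℝ)^ |α| + 16* |α| *(2:ℝ)^ |α|) * T^α * h := by
              nlinarith [mul_nonneg (le_of_lt hTα) hh0, abs_nonneg α,
                mul_nonneg (mul_nonneg (abs_nonneg α) (le_of_lt h2a))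
                  (mul_nonneg (le_of_lt hTα) hh0),
                mul_le_mul_of_nonneg_right (mul_le_mul_of_nonneg_right h28 (le_of_lt hTα)) hh0]
      · -- α < 0
        rcases eq_or_lt_of_le hy with hy0 | hypos
        · rw [← hy0]; simp only [mul_zero]
          positivity
        have hA2pos : 0 < s^2+y^2 := by nlinarith
        have ha12 : (s^2+x^2)^α ≤ (s^2+y^2)^α :=
          Real.rpow_le_rpow_of_nonpos hA2pos (by nlinarith) (le_of_lt h0)
        have habs : |(s^2+x^2)^α - (s^2+y^2)^α| ≤ (s^2+y^2)^α := by
          rw [abs_sub_comm, abs_of_nonneg (by linarith)]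
          linarith [le_of_lt hA1α]
        rcases le_or_gt (s^2+x^2) (4*(s^2+y^2)) with hc | hc
        · -- A₁ ≤ 4 A₂ : a₂ ≤ 4^{|α|} A₁^α
          have e1 : (s^2+y^2)^α ≤ ((s^2+x^2)/4)^α :=
            Real.rpow_le_rpow_of_nonpos (by linarith) (by linarith) (le_of_lt h0)
          have e2 : ((s^2+x^2)/4)^α = (4:ℝ)^(-α) * (s^2+x^2)^α :=
            quarter_rpow _ _ (le_of_lt hA1pos)
          have e3 : (4:ℝ)^(-α) ≤ (4:ℝ)^ |α| :=
            Real.rpow_le_rpow_of_exponent_le (by norm_num) (neg_le_abs α)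
          have e4 : (s^2+y^2)^α ≤ (4:ℝ)^ |α| * (s^2+x^2)^α := by
            rw [e2] at e1
            calc (s^2+y^2)^α ≤ (4:ℝ)^(-α) * (s^2+x^2)^α := e1
              _ ≤ (4:ℝ)^ |α| * (s^2+x^2)^α :=
                  mul_le_mul_of_nonneg_right e3 (le_of_lt hA1α)
          calc |(s^2+x^2)^α - (s^2+y^2)^α| * y
              ≤ (s^2+y^2)^α * h := mul_le_mul habs hyh hy (Real.rpow_nonneg hA2nn _)
            _ ≤ ((4:ℝ)^ |α| * (s^2+x^2)^α) * h := mul_le_mul_of_nonneg_right e4 hh0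
            _ ≤ ((4:ℝ)^ |α| * ((2:ℝ)^ |α| * T^α)) * h := by
                apply mul_le_mul_of_nonneg_right _ hh0
                exact mul_le_mul_of_nonneg_left hle1 (le_of_lt h4a)
            _ = ((8:ℝ)^ |α| * T^α) * h := by rw [← h48]; ring
            _ ≤ (4*(8:ℝ)^ |α| + 16* |α| *(2:ℝ)^ |α|) * T^α * h := by
                nlinarith [mul_nonneg (le_of_lt hTα) hh0, abs_nonneg α,
                  mul_nonneg (mul_nonneg (le_of_lt h8a) (le_of_lt hTα)) hh0,
                  mul_nonneg (mul_nonneg (abs_nonneg α) (le_of_lt h2a))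
                    (mul_nonneg (le_of_lt hTα) hh0)]
        · -- 4 A₂ < A₁ : use a₂ y ≤ A₂^{α+1/2} ≤ (A₁/4)^{α+1/2}
          have hy12 : y ≤ (s^2+y^2) ^ ((1:ℝ)/2) := by
            calc y = ((y^2):ℝ) ^ ((1:ℝ)/2) := (sq_rpow_half y hy).symm
              _ ≤ (s^2+y^2) ^ ((1:ℝ)/2) :=
                  Real.rpow_le_rpow (sq_nonneg y) (by nlinarith) (by norm_num)
          have e0 : (s^2+y^2)^α * y ≤ (s^2+y^2)^(α + 1/2) := by
            rw [Real.rpow_add hA2pos]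
            exact mul_le_mul_of_nonneg_left hy12 (Real.rpow_nonneg hA2nn _)
          have e1 : (s^2+y^2)^(α+1/2) ≤ ((s^2+x^2)/4)^(α+1/2) :=
            Real.rpow_le_rpow hA2nn (by linarith) (by linarith)
          have e2 : ((s^2+x^2)/4)^(α+1/2) = (4:ℝ)^(-(α+1/2)) * (s^2+x^2)^(α+1/2) :=
            quarter_rpow _ _ (le_of_lt hA1pos)
          have e3 : (4:ℝ)^(-(α+1/2)) ≤ (4:ℝ)^ |α| := by
            apply Real.rpow_le_rpow_of_exponent_le (by norm_num)
            have := neg_le_abs α; linarith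
          have e5 : (s^2+x^2)^((1:ℝ)/2) ≤ 4*h := by
            have hs2 : s^2 ≤ s^2+y^2 := by nlinarith
            have hx2 : s^2+x^2 ≤ (4*h)^2 := by nlinarith
            calc (s^2+x^2)^((1:ℝ)/2) ≤ (((4*h)^2):ℝ)^((1:ℝ)/2) :=
                Real.rpow_le_rpow (le_of_lt hA1pos) hx2 (by norm_num)
              _ = 4*h := sq_rpow_half (4*h) (by linarith)
          have e6 : (s^2+x^2)^(α+1/2) ≤ (s^2+x^2)^α * (4*h) := by
            rw [Real.rpow_add hA1pos]
            exact mul_le_mul_of_nonneg_left e5 (le_of_lt hA1α)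
          calc |(s^2+x^2)^α - (s^2+y^2)^α| * y
              ≤ (s^2+y^2)^α * y := mul_le_mul_of_nonneg_right habs hy
            _ ≤ (s^2+y^2)^(α + 1/2) := e0
            _ ≤ (4:ℝ)^(-(α+1/2)) * (s^2+x^2)^(α+1/2) := by rw [← e2]; exact e1
            _ ≤ (4:ℝ)^ |α| * (s^2+x^2)^(α+1/2) := by
                apply mul_le_mul_of_nonneg_right e3 (Real.rpow_nonneg (le_of_lt hA1pos) _)
            _ ≤ (4:ℝ)^ |α| * ((s^2+x^2)^α * (4*h)) :=
                mul_le_mul_of_nonneg_left e6 (le_of_lt h4a)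
            _ ≤ (4:ℝ)^ |α| * (((2:ℝ)^ |α| * T^α) * (4*h)) := by
                apply mul_le_mul_of_nonneg_left _ (le_of_lt h4a)
                exact mul_le_mul_of_nonneg_right hle1 (by linarith)
            _ = 4 * ((8:ℝ)^ |α| * T^α) * h := by rw [← h48]; ring
            _ ≤ (4*(8:ℝ)^ |α| + 16* |α| *(2:ℝ)^ |α|) * T^α * h := by
                nlinarith [mul_nonneg (mul_nonneg (abs_nonneg α) (le_of_lt h2a))
                  (mul_nonneg (le_of_lt hTα) hh0)]
  calc (s^2+x^2)^α * h + |(s^2+x^2)^α - (s^2+y^2)^α| * y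
      ≤ (2:ℝ)^ |α| * T^α * h + (4*(8:ℝ)^ |α| + 16* |α| *(2:ℝ)^ |α|) * T^α * h := by
        linarith
    _ = ((2:ℝ)^ |α| + 4*(8:ℝ)^ |α| + 16* |α| *(2:ℝ)^ |α|) * T^α * h := by ring

set_option maxHeartbeats 1000000 in
lemma key {F : Type*} [NormedAddCommGroup F] [InnerProductSpace ℝ F]
    (α : ℝ) (hα : -(1/2) < α) (s : ℝ) (z₁ z₂ : F) (hz : ‖z₂‖ ≤ ‖z₁‖) :
    min (1+2*α) 1 * (2:ℝ)^(-|α|) / 2 * (s^2 + ‖z₁‖^2 + ‖z₂‖^2)^α * ‖z₁ - z₂‖ ≤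
      ‖(s^2+‖z₁‖^2)^α • z₁ - (s^2+‖z₂‖^2)^α • z₂‖ ∧
    ‖(s^2+‖z₁‖^2)^α • z₁ - (s^2+‖z₂‖^2)^α • z₂‖ ≤
      ((2:ℝ)^ |α| + 4*(8:ℝ)^ |α| + 16 * |α| * (2:ℝ)^ |α|) * (s^2 + ‖z₁‖^2 + ‖z₂‖^2)^α * ‖z₁ - z₂‖ := by
  by_cases hz12 : z₁ = z₂
  · subst hz12; constructor <;> simp
  have hh : 0 < ‖z₁ - z₂‖ := by
    rw [norm_pos_iff]; exact sub_ne_zero.mpr hz12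
  have hx0 : 0 ≤ ‖z₁‖ := norm_nonneg _
  have hy0 : 0 ≤ ‖z₂‖ := norm_nonneg _
  have hTpos : 0 < s^2 + ‖z₁‖^2 + ‖z₂‖^2 := by
    rcases eq_or_lt_of_le hx0 with h1 | h1
    · exfalso
      have hz1 : z₁ = 0 := norm_eq_zero.mp h1.symm
      have hz2 : z₂ = 0 := norm_eq_zero.mp (le_antisymm (h1 ▸ hz) hy0)
      exact hz12 (by rw [hz1, hz2])
    · nlinarith
  set a₁ := (s^2+‖z₁‖^2)^α with ha₁def
  set a₂ := (s^2+‖z₂‖^2)^α with ha₂def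
  have ha₁nn : 0 ≤ a₁ := Real.rpow_nonneg (by positivity) _
  have ha₂nn : 0 ≤ a₂ := Real.rpow_nonneg (by positivity) _
  have hcomm : (inner ℝ z₂ z₁) = (inner ℝ z₁ z₂) := real_inner_comm z₁ z₂
  have hE : (inner ℝ (a₁ • z₁ - a₂ • z₂) (z₁ - z₂)) =
      a₁*‖z₁‖^2 + a₂*‖z₂‖^2 - (a₁+a₂)*(inner ℝ z₁ z₂) := by
    simp only [inner_sub_left, inner_sub_right, real_inner_smul_left,
      real_inner_self_eq_norm_sq]
    linear_combination (-(a₂)) * hcomm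
  have hnorm : ‖z₁ - z₂‖^2 = ‖z₁‖^2 + ‖z₂‖^2 - 2*(inner ℝ z₁ z₂) := by
    rw [norm_sub_sq_real z₁ z₂]; ring
  have hd : (inner ℝ z₁ z₂) ≤ ‖z₁‖*‖z₂‖ := real_inner_le_norm z₁ z₂
  constructor
  · -- lower bound
    have hsl := scalar_lower α s ‖z₁‖ ‖z₂‖ hα hy0 hz hTpos
    have ha1 := a1_ge α s ‖z₁‖ ‖z₂‖ hy0 hz hTpos
    have hTα : 0 < (s^2+‖z₁‖^2+‖z₂‖^2) ^ α := Real.rpow_pos_of_pos hTpos _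
    have h2pow : 0 < (2:ℝ)^(-|α|) := Real.rpow_pos_of_pos (by norm_num) _
    have hmin1 : min (1+2*α) 1 ≤ 1 := min_le_right _ _
    have hminnn : 0 ≤ min (1+2*α) 1 := le_min (by linarith) (by norm_num)
    have h1 := mul_le_mul_of_nonneg_right hsl (sub_nonneg.mpr hz)
    have hcl : min (1+2*α) 1 * (2:ℝ)^(-|α|) * (s^2+‖z₁‖^2+‖z₂‖^2)^α ≤ a₁ := by
      calc min (1+2*α) 1 * (2:ℝ)^(-|α|) * (s^2+‖z₁‖^2+‖z₂‖^2)^α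
          = min (1+2*α) 1 * ((2:ℝ)^(-|α|) * (s^2+‖z₁‖^2+‖z₂‖^2)^α) := by ring
        _ ≤ 1 * ((2:ℝ)^(-|α|) * (s^2+‖z₁‖^2+‖z₂‖^2)^α) :=
            mul_le_mul_of_nonneg_right hmin1 (by positivity)
        _ = (2:ℝ)^(-|α|) * (s^2+‖z₁‖^2+‖z₂‖^2)^α := one_mul _
        _ ≤ a₁ := ha1
    have h2 := mul_le_mul_of_nonneg_right
      (by linarith : min (1+2*α) 1 * (2:ℝ)^(-|α|) * (s^2+‖z₁‖^2+‖z₂‖^2)^α ≤ a₁ + a₂)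
      (sub_nonneg.mpr hd)
    have hElb : min (1+2*α) 1 * (2:ℝ)^(-|α|) / 2 * (s^2+‖z₁‖^2+‖z₂‖^2)^α * ‖z₁ - z₂‖^2 ≤
        a₁*‖z₁‖^2 + a₂*‖z₂‖^2 - (a₁+a₂)*(inner ℝ z₁ z₂) := by
      rw [hnorm]
      nlinarith [h1, h2, mul_nonneg (mul_nonneg (mul_nonneg hminnn (le_of_lt h2pow))
        (le_of_lt hTα)) (sq_nonneg (‖z₁‖ - ‖z₂‖))]
    have hcs : a₁*‖z₁‖^2 + a₂*‖z₂‖^2 - (a₁+a₂)*(inner ℝ z₁ z₂) ≤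
        ‖a₁ • z₁ - a₂ • z₂‖ * ‖z₁ - z₂‖ := by
      rw [← hE]; exact real_inner_le_norm _ _
    refine le_of_mul_le_mul_right ?_ hh
    nlinarith [hElb, hcs]
  · -- upper bound
    have hdecomp : a₁ • z₁ - a₂ • z₂ = a₁ • (z₁ - z₂) + (a₁ - a₂) • z₂ := by
      rw [smul_sub, sub_smul]; abel
    have htri : ‖a₁ • z₁ - a₂ • z₂‖ ≤ a₁ * ‖z₁ - z₂‖ + |a₁ - a₂| * ‖z₂‖ := by
      rw [hdecomp]
      calc ‖a₁ • (z₁ - z₂) + (a₁ - a₂) • z₂‖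
          ≤ ‖a₁ • (z₁ - z₂)‖ + ‖(a₁ - a₂) • z₂‖ := norm_add_le _ _
        _ = a₁ * ‖z₁ - z₂‖ + |a₁ - a₂| * ‖z₂‖ := by
            rw [norm_smul, norm_smul, Real.norm_eq_abs, Real.norm_eq_abs,
              abs_of_nonneg ha₁nn]
    have hsu := scalar_upper α s ‖z₁‖ ‖z₂‖ ‖z₁ - z₂‖ hα hy0 hz hTpos (le_of_lt hh)
      (norm_sub_norm_le z₁ z₂)
    linarith

/-- Equivalence `|W_s(z₁) − W_s(z₂)| ≈ (s² + |z₁|² + |z₂|²)^{(p−2)/2}|z₁ − z₂|`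
for the vector field `W_s(z) := (s² + |z|²)^{(p−2)/2} z`, `p > 3/2`. -/
theorem stmt5 (n N : ℕ) (hn : 0 < n) (hN : 0 < N) (p : ℝ) (hp : 3 / 2 < p) :
    ∃ c₁ c₂ : ℝ, 0 < c₁ ∧ 0 < c₂ ∧
      ∀ (s : ℝ), 0 ≤ s → ∀ z₁ z₂ : EuclideanSpace ℝ (Fin N × Fin n),
        c₁ * (s ^ 2 + ‖z₁‖ ^ 2 + ‖z₂‖ ^ 2) ^ ((p - 2) / 2) * ‖z₁ - z₂‖ ≤
          ‖(s ^ 2 + ‖z₁‖ ^ 2) ^ ((p - 2) / 2) • z₁ - (s ^ 2 + ‖z₂‖ ^ 2) ^ ((p - 2) / 2) • z₂‖ ∧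
        ‖(s ^ 2 + ‖z₁‖ ^ 2) ^ ((p - 2) / 2) • z₁ - (s ^ 2 + ‖z₂‖ ^ 2) ^ ((p - 2) / 2) • z₂‖ ≤
          c₂ * (s ^ 2 + ‖z₁‖ ^ 2 + ‖z₂‖ ^ 2) ^ ((p - 2) / 2) * ‖z₁ - z₂‖ := by
  have hα : -(1/2:ℝ) < (p-2)/2 := by linarith
  refine ⟨min (1+2*((p-2)/2)) 1 * (2:ℝ)^(-|(p-2)/2|) / 2,
    (2:ℝ)^ |(p-2)/2| + 4*(8:ℝ)^ |(p-2)/2| + 16 * |(p-2)/2| * (2:ℝ)^ |(p-2)/2|, ?_, ?_, ?_⟩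
  · have h1 : 0 < min (1+2*((p-2)/2)) 1 := lt_min (by linarith) one_pos
    have h2 : 0 < (2:ℝ)^(-|(p-2)/2|) := Real.rpow_pos_of_pos (by norm_num) _
    positivity
  · have h2 : 0 < (2:ℝ)^ |(p-2)/2| := Real.rpow_pos_of_pos (by norm_num) _
    have h8 : 0 < (8:ℝ)^ |(p-2)/2| := Real.rpow_pos_of_pos (by norm_num) _
    have ha : 0 ≤ |(p-2)/2| := abs_nonneg _
    nlinarith [mul_nonneg ha (le_of_lt h2)]
  · intro s _ z₁ z₂
    rcases le_total ‖z₂‖ ‖z₁‖ with h | h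
    · exact key ((p-2)/2) hα s z₁ z₂ h
    · obtain ⟨k1, k2⟩ := key ((p-2)/2) hα s z₂ z₁ h
      rw [norm_sub_rev z₂ z₁,
        norm_sub_rev ((s^2+‖z₂‖^2)^((p-2)/2) • z₂) ((s^2+‖z₁‖^2)^((p-2)/2) • z₁),
        show s^2 + ‖z₂‖^2 + ‖z₁‖^2 = s^2 + ‖z₁‖^2 + ‖z₂‖^2 by ring] at k1 k2
      exact ⟨k1, k2⟩
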